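/- Let α₃, α₄ ∈ ℤ[√2] be coprime with α₃ > 0. There exists an absolute constant C > 0 (independent of all other data) such that for every s > 0, β₁, β₂ ∈ ℤ[√2] with v = v(β₁,β₂), and h = diag(h₁,h₂) ∈ H, defining J₁ = {x ∈ ℝ : (β₁,β₂)h₁ + x·(α₃,α₄)h₁ ∈ λ^{−2r}T(s)} and J₂ = {x ∈ ℝ : (σ(β₁),σ(β₂))h₂ + x·(σ(α₃),σ(α₄))h₂ ∈ λ^{2r}𝒲}: (i) 𝓛_v·h ∩ 𝒯(s) = ∅ if and only if 𝓛' ∩ (J₁ × J₂) = ∅; (ii) if 𝓛_v·h ∩ 𝒯(s) = ∅ then Leb(J₁)·Leb(J₂) ≤ C, where Leb denotes one-dimensional Lebesgue measure. -/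

import Mathlib

open MeasureTheory Matrix Set Pointwise

noncomputable section

/-- The real embedding of `ℤ[√2]`, `a + b√2 ↦ a + b√2`. -/
def emb (α : Zsqrtd 2) : ℝ := (α.re : ℝ) + (α.im : ℝ) * Real.sqrt 2

/-- The Galois-conjugate embedding `σ`, `a + b√2 ↦ a − b√2`. -/
def embc (α : Zsqrtd 2) : ℝ := (α.re : ℝ) - (α.im : ℝ) * Real.sqrt 2

/-- The fundamental unit `λ = 1 + √2`. -/
def lam : ℝ := 1 + Real.sqrt 2

/-- `𝓛'`: the Minkowski embedding of `ℤ[√2]` in `ℝ²`. -/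
def Lp : Set (ℝ × ℝ) := {p | ∃ α : Zsqrtd 2, p = (emb α, embc α)}

/-- `v(β₁,β₂) = (β₁, β₂, σ(β₁), σ(β₂))`. -/
def latvec (β₁ β₂ : Zsqrtd 2) : Fin 4 → ℝ := ![emb β₁, emb β₂, embc β₁, embc β₂]

/-- `𝓛`: the Minkowski embedding of `ℤ[√2]²` in `ℝ⁴`. -/
def Lquad : Set (Fin 4 → ℝ) := {v | ∃ β₁ β₂ : Zsqrtd 2, v = latvec β₁ β₂}

/-- `𝓛h`, for a 4×4 real matrix `h` (row vectors, right multiplication). -/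
def latimage (h : Matrix (Fin 4) (Fin 4) ℝ) : Set (Fin 4 → ℝ) :=
  (fun v => Matrix.vecMul v h) '' Lquad

def nmat (x : ℝ) : Matrix (Fin 2) (Fin 2) ℝ := !![1, x; 0, 1]
def amat (y : ℝ) : Matrix (Fin 2) (Fin 2) ℝ := !![y, 0; 0, y⁻¹]
def kmat (θ : ℝ) : Matrix (Fin 2) (Fin 2) ℝ :=
  !![Real.cos θ, -Real.sin θ; Real.sin θ, Real.cos θ]

/-- Block diagonal 4×4 matrix from two 2×2 blocks. -/
def bd (A B : Matrix (Fin 2) (Fin 2) ℝ) : Matrix (Fin 4) (Fin 4) ℝ :=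
  !![A 0 0, A 0 1, 0, 0;
     A 1 0, A 1 1, 0, 0;
     0, 0, B 0 0, B 0 1;
     0, 0, B 1 0, B 1 1]

/-- `h(x₁,x₂,y₁,y₂,θ₁,θ₂) = diag(n(x₁)a(y₁)k(θ₁), n(x₂)a(y₂)k(θ₂))`. -/
def hmat (x₁ x₂ y₁ y₂ θ₁ θ₂ : ℝ) : Matrix (Fin 4) (Fin 4) ℝ :=
  bd (nmat x₁ * amat y₁ * kmat θ₁) (nmat x₂ * amat y₂ * kmat θ₂)

/-- `H = SL₂(ℝ)² ⊂ SL₄(ℝ)` (block diagonal). -/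
def Hset : Set (Matrix (Fin 4) (Fin 4) ℝ) :=
  {h | ∃ A B : Matrix (Fin 2) (Fin 2) ℝ, A.det = 1 ∧ B.det = 1 ∧ h = bd A B}

/-- `Γ_K = {diag(A, σ(A)) : A ∈ SL₂(ℤ[√2])}`. -/
def GammaK : Set (Matrix (Fin 4) (Fin 4) ℝ) :=
  {g | ∃ A : Matrix (Fin 2) (Fin 2) (Zsqrtd 2), A.det = 1 ∧ g = bd (A.map emb) (A.map embc)}

/-- `𝒲`: the open regular octagon of side length √2. -/
def Woct : Set (ℝ × ℝ) :=
  {p | |p.1| < lam / Real.sqrt 2 ∧ |p.2| < lam / Real.sqrt 2 ∧ |p.1| + |p.2| < lam}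

/-- `𝒲' = 𝒲 ∖ (√2−1)𝒲`. -/
def Wp : Set (ℝ × ℝ) := Woct \ ((Real.sqrt 2 - 1) • Woct)

/-- `θ̂ = 48√2/π⁴`, the density of visible points. -/
def thetaHat : ℝ := 48 * Real.sqrt 2 / Real.pi ^ 4

/-- `T(s)`: open triangle with vertices `(0,0)`, `(s/θ̂)^{1/2}(1,±1)`. -/
def Tset (s : ℝ) : Set (ℝ × ℝ) :=
  {p | 0 < p.1 ∧ p.1 < Real.sqrt (s / thetaHat) ∧ |p.2| < p.1}

/-- `𝔉`: a fundamental domain of `𝓛'`. -/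
def Fdom : Set (ℝ × ℝ) :=
  {p | ∃ r₁ ∈ Set.Ico (0:ℝ) 1, ∃ r₂ ∈ Set.Ico (0:ℝ) 1,
    p = (1 + r₁ + r₂ * Real.sqrt 2, 2 + r₁ - r₂ * Real.sqrt 2)}

/-- The Siegel domain `𝔇_t`. -/
def Dset (t : ℝ) : Set (Matrix (Fin 4) (Fin 4) ℝ) :=
  {h | ∃ x₁ x₂ y₁ y₂ θ₁ θ₂ : ℝ, (x₁, x₂) ∈ Fdom ∧ 0 < y₁ ∧ 0 < y₂ ∧ t ≤ y₁ * y₂ ∧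
    lam ^ (-2 : ℤ) ≤ y₁ / y₂ ∧ y₁ / y₂ ≤ lam ^ 2 ∧
    θ₁ ∈ Set.Ico 0 Real.pi ∧ θ₂ ∈ Set.Ico 0 Real.pi ∧ h = hmat x₁ x₂ y₁ y₂ θ₁ θ₂}

/-- Row vector times 2×2 matrix, on `ℝ × ℝ`. -/
def mul2 (p : ℝ × ℝ) (M : Matrix (Fin 2) (Fin 2) ℝ) : ℝ × ℝ :=
  (p.1 * M 0 0 + p.2 * M 1 0, p.1 * M 0 1 + p.2 * M 1 1)

/-- `r(s)`: the unique integer with `λ^{2r} ≤ s^{1/4} < λ^{2(r+1)}`. -/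
def rr (s : ℝ) : ℤ := ⌊Real.logb (lam ^ 2) (s ^ ((1:ℝ)/4))⌋

/-- `𝒯(s)` with explicit integer `r`: `λ^{−2r}T(s) × λ^{2r}𝒲`. -/
def calT (s : ℝ) (r : ℤ) : Set (Fin 4 → ℝ) :=
  {v | (lam ^ (2*r) * v 0, lam ^ (2*r) * v 1) ∈ Tset s ∧
       (lam ^ (-(2*r)) * v 2, lam ^ (-(2*r)) * v 3) ∈ Woct}

/-- `𝒯(s) = λ^{−2r(s)}T(s) × λ^{2r(s)}𝒲`. -/
def calTs (s : ℝ) : Set (Fin 4 → ℝ) := calT s (rr s)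

/-- Euclidean norm on `ℝ⁴`. -/
def enorm4 (v : Fin 4 → ℝ) : ℝ := Real.sqrt (∑ i, (v i) ^ 2)

/-- `𝓛h̃ = (ℤ(y₁,0,y₂,0) + ℤ√2(y₁,0,−y₂,0) + ℝ(0,1,0,0) + ℝ(0,0,0,1))·diag(k(θ₁),k(θ₂))`. -/
def Ltilde (y₁ y₂ θ₁ θ₂ : ℝ) : Set (Fin 4 → ℝ) :=
  {v | ∃ (m n : ℤ) (c₁ c₂ : ℝ),
    v = Matrix.vecMul ![((m:ℝ) + (n:ℝ) * Real.sqrt 2) * y₁, c₁,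
          ((m:ℝ) - (n:ℝ) * Real.sqrt 2) * y₂, c₂] (bd (kmat θ₁) (kmat θ₂))}

open Classical in
/-- Real-valued indicator of a proposition. -/
def ind (P : Prop) : ℝ := if P then 1 else 0

/-- `c_H = 3/π⁴`. -/
def cH : ℝ := 3 / Real.pi ^ 4

/-- `Y_t = {(y₁,y₂) : y₁,y₂ > 0, y₁y₂ ≥ t, y₁/y₂ ∈ (λ⁻²,λ²)}`. -/
def Yt (t : ℝ) : Set (ℝ × ℝ) :=
  {y | 0 < y.1 ∧ 0 < y.2 ∧ t ≤ y.1 * y.2 ∧ lam ^ (-2:ℤ) < y.1 / y.2 ∧ y.1 / y.2 < lam ^ 2}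

/-- The main term `G_M(s)` (depending on the Siegel-domain parameter `t`). -/
def GM (t s : ℝ) : ℝ :=
  cH * ∫ θ₂ in Set.Ico (0:ℝ) Real.pi, ∫ θ₁ in Set.Ico (0:ℝ) Real.pi, ∫ y in Yt t, ∫ x in Fdom,
    (y.1 ^ 3 * y.2 ^ 3)⁻¹ * ind (Ltilde y.1 y.2 θ₁ θ₂ ∩ calTs s = ∅)

/-- The error term `G_E(s)`. -/
def GE (t s : ℝ) : ℝ :=
  cH * ∫ θ₂ in Set.Ico (0:ℝ) Real.pi, ∫ θ₁ in Set.Ico (0:ℝ) Real.pi, ∫ y in Yt t, ∫ x in Fdom,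
    (y.1 ^ 3 * y.2 ^ 3)⁻¹ *
      ind (latimage (hmat x.1 x.2 y.1 y.2 θ₁ θ₂) ∩ calTs s = ∅ ∧
           (Ltilde y.1 y.2 θ₁ θ₂ ∩ calTs s).Nonempty)

/-- `J = [0,π/4] ∪ [3π/4,π)`. -/
def Jset : Set ℝ := Set.Icc 0 (Real.pi/4) ∪ Set.Ico (3*Real.pi/4) Real.pi

/-- `Y = {(y₁,y₂) : y₁ > 0, 1 < y₂ < λ²}`. -/
def Yset : Set (ℝ × ℝ) := {y | 0 < y.1 ∧ 1 < y.2 ∧ y.2 < lam ^ 2}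

/-- `T₁`: open triangle with vertices `(0,0)`, `(1,±1)`. -/
def T1 : Set (ℝ × ℝ) := {p | 0 < p.1 ∧ p.1 < 1 ∧ |p.2| < p.1}

/-- `ℓ₁(θ₁)`: first-coordinate projection of `θ̂^{−1/2}T₁k(−θ₁)`. -/
def ell1 (θ₁ : ℝ) : Set ℝ :=
  {x | ∃ p ∈ T1, x = (mul2 ((Real.sqrt thetaHat)⁻¹ • p) (kmat (-θ₁))).1}

/-- `ℓ₂(θ₂)`: first-coordinate projection of `𝒲k(−θ₂)`. -/
def ell2 (θ₂ : ℝ) : Set ℝ := {x | ∃ p ∈ Woct, x = (mul2 p (kmat (-θ₂))).1}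

/-- `C_𝒫 = 2304(2−√2)/π⁸`. -/
def CP : ℝ := 2304 * (2 - Real.sqrt 2) / Real.pi ^ 8

/-- `ζ_K(2) = π⁴/(48√2)`. -/
def zetaK2 : ℝ := Real.pi ^ 4 / (48 * Real.sqrt 2)

/-- `𝒯'(s) = T(s) × 𝒲`. -/
def Tprime (s : ℝ) : Set (Fin 4 → ℝ) :=
  {v | (v 0, v 1) ∈ Tset s ∧ (v 2, v 3) ∈ Woct}

/-- `L₁(θ₁)` from Lemma 3.4: projection of `λ^{−2r}T(s)k(−θ₁)` onto the x-axis. -/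
def L1set (s : ℝ) (r : ℤ) (θ₁ : ℝ) : Set ℝ :=
  {x | ∃ p ∈ Tset s, x = (mul2 ((lam ^ (-(2*r)) : ℝ) • p) (kmat (-θ₁))).1}

/-- `L₂(θ₂)`: projection of `λ^{2r}𝒲k(−θ₂)` onto the x-axis. -/
def L2set (r : ℤ) (θ₂ : ℝ) : Set ℝ :=
  {x | ∃ p ∈ Woct, x = (mul2 ((lam ^ (2*r) : ℝ) • p) (kmat (-θ₂))).1}

/-- `n(x)a(y)k(θ)` where `y,θ` are determined by `y⁻¹(sin θ, cos θ) = z`. -/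
def hz (z : ℝ × ℝ) (x : ℝ) : Matrix (Fin 2) (Fin 2) ℝ :=
  nmat x * amat (Real.sqrt (z.1 ^ 2 + z.2 ^ 2))⁻¹ *
    !![(Real.sqrt (z.1 ^ 2 + z.2 ^ 2))⁻¹ * z.2, -((Real.sqrt (z.1 ^ 2 + z.2 ^ 2))⁻¹ * z.1);
       (Real.sqrt (z.1 ^ 2 + z.2 ^ 2))⁻¹ * z.1, (Real.sqrt (z.1 ^ 2 + z.2 ^ 2))⁻¹ * z.2]

/-- The function `F₂` of Lemma 4.7. -/
def F2 (z₁ : ℝ) : ℝ :=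
  (24 / Real.pi ^ 4) * ∫ z₂ in Set.Ioo (-z₁) z₁, ∫ w in Wp, ∫ x in Fdom,
    ind (latimage (bd (hz (z₁, z₂) x.1) (hz w x.2)) ∩ Tprime (z₁ ^ 2 * thetaHat) = ∅)

/-- The box `B(α₃,α₄)`. -/
def Bbox (α₃ α₄ : Zsqrtd 2) (C₁ s : ℝ) : Set (ℝ × ℝ) :=
  {x | |x.1 + emb α₄ / emb α₃| ≤ C₁ / Real.sqrt s ∧
       |x.2 + embc α₄ / embc α₃| ≤ C₁ / Real.sqrt s}

/-- The matrix `h` determined by `s, z₂, w, x₁, x₂` via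
`y₁⁻¹(sin θ₁, cos θ₁) = λ^{−2r}(θ̂^{−1/2}s^{1/2}, z₂)`, `y₂⁻¹(sin θ₂, cos θ₂) = λ^{2r}w`. -/
def hfull (s z₂ : ℝ) (w : ℝ × ℝ) (x₁ x₂ : ℝ) : Matrix (Fin 4) (Fin 4) ℝ :=
  bd (hz ((lam ^ (-(2 * rr s)) : ℝ) • (Real.sqrt (s / thetaHat), z₂)) x₁)
     (hz ((lam ^ (2 * rr s) : ℝ) • w) x₂)

/-- `F⁺_{(α₃,α₄)}(s)`. -/
def Fplus (α₃ α₄ : Zsqrtd 2) (C₁ s : ℝ) : ℝ :=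
  (Real.sqrt s)⁻¹ * ∫ z₂ in Set.Ioo (0:ℝ) (Real.sqrt (s / thetaHat)), ∫ w in Wp,
    ∫ x in Bbox α₃ α₄ C₁ s, ind (latimage (hfull s z₂ w x.1 x.2) ∩ calTs s = ∅)

/-- `F⁻_{(α₃,α₄)}(s)`. -/
def Fminus (α₃ α₄ : Zsqrtd 2) (C₁ s : ℝ) : ℝ :=
  (Real.sqrt s)⁻¹ * ∫ z₂ in Set.Ioo (-Real.sqrt (s / thetaHat)) (0:ℝ), ∫ w in Wp,
    ∫ x in Bbox α₃ α₄ C₁ s, ind (latimage (hfull s z₂ w x.1 x.2) ∩ calTs s = ∅)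

/-- `F_{(α₃,α₄)}(s)`. -/
def Ffull (α₃ α₄ : Zsqrtd 2) (C₁ s : ℝ) : ℝ :=
  (Real.sqrt s)⁻¹ *
    ∫ z₂ in Set.Ioo (-Real.sqrt (s / thetaHat)) (Real.sqrt (s / thetaHat)), ∫ w in Wp,
      ∫ x in Bbox α₃ α₄ C₁ s, ind (latimage (hfull s z₂ w x.1 x.2) ∩ calTs s = ∅)

/-- `v₁ = (α₃, α₄, σ(α₃), σ(α₄))`. -/
def vv1 (α₃ α₄ : Zsqrtd 2) : Fin 4 → ℝ := ![emb α₃, emb α₄, embc α₃, embc α₄]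

/-- `v₂ = (√2α₃, √2α₄, −√2σ(α₃), −√2σ(α₄))`. -/
def vv2 (α₃ α₄ : Zsqrtd 2) : Fin 4 → ℝ :=
  ![Real.sqrt 2 * emb α₃, Real.sqrt 2 * emb α₄,
    -(Real.sqrt 2 * embc α₃), -(Real.sqrt 2 * embc α₄)]

/-- `b₁ = (α₃, α₄, 0, 0)`. -/
def bb1 (α₃ α₄ : Zsqrtd 2) : Fin 4 → ℝ := ![emb α₃, emb α₄, 0, 0]

/-- `b₂ = (0, 0, σ(α₃), σ(α₄))`. -/
def bb2 (α₃ α₄ : Zsqrtd 2) : Fin 4 → ℝ := ![0, 0, embc α₃, embc α₄]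

/-- The subgrid `𝓛_v = v + ℤv₁ + ℤv₂`. -/
def Lv (α₃ α₄ : Zsqrtd 2) (v : Fin 4 → ℝ) : Set (Fin 4 → ℝ) :=
  {u | ∃ m n : ℤ, u = v + (m:ℝ) • vv1 α₃ α₄ + (n:ℝ) • vv2 α₃ α₄}

/-- The filled plane `Π_v = v + ℝb₁ + ℝb₂`. -/
def Piv (α₃ α₄ : Zsqrtd 2) (v : Fin 4 → ℝ) : Set (Fin 4 → ℝ) :=
  {u | ∃ c₁ c₂ : ℝ, u = v + c₁ • bb1 α₃ α₄ + c₂ • bb2 α₃ α₄}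

/-- `d(s) = θ̂^{−1/2}λ^{−2r}s^{1/2}`. -/
def ds (s : ℝ) : ℝ := lam ^ (-(2 * rr s)) * Real.sqrt (s / thetaHat)

/-- The explicit integral representation `Φ(s)` of the limiting gap distribution `F(s)`. -/
def Phi (s : ℝ) : ℝ :=
  (1 / ((2:ℝ) ^ ((11:ℝ)/2) * Real.sqrt thetaHat * zetaK2 * Real.sqrt s)) *
    ∫ z₂ in Set.Ioo (-Real.sqrt (s / thetaHat)) (Real.sqrt (s / thetaHat)), ∫ w in Wp,
      ∫ x in Fdom, ind (latimage (hfull s z₂ w x.1 x.2) ∩ calTs s = ∅)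


lemma s2_sq : Real.sqrt 2 * Real.sqrt 2 = 2 := Real.mul_self_sqrt (by norm_num)
lemma s2_pos : (0:ℝ) < Real.sqrt 2 := Real.sqrt_pos.2 (by norm_num)
lemma s2_lt : Real.sqrt 2 < 1.5 := by nlinarith [s2_sq, s2_pos]
lemma s2_gt : 1.4 < Real.sqrt 2 := by nlinarith [s2_sq, s2_pos]
lemma lam_pos : (0:ℝ) < lam := by unfold lam; linarith [s2_pos]
lemma lam_one_lt : (1:ℝ) < lam := by unfold lam; linarith [s2_pos]
lemma lam_ne : lam ≠ 0 := ne_of_gt lam_pos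
lemma emb_mk (m n : ℤ) : emb ⟨m,n⟩ = (m:ℝ) + (n:ℝ) * Real.sqrt 2 := rfl
lemma embc_mk (m n : ℤ) : embc ⟨m,n⟩ = (m:ℝ) - (n:ℝ) * Real.sqrt 2 := rfl
lemma emb_eq_zero {a : Zsqrtd 2} (h : emb a = 0) : a = 0 := by
  by_cases him : a.im = 0
  · have : (a.re : ℝ) = 0 := by simpa [emb, him] using h
    have hre : a.re = 0 := by exact_mod_cast this
    ext <;> simp [hre, him]
  · exfalso
    apply irrational_sqrt_two
    refine ⟨(-a.re / a.im : ℚ), ?_⟩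
    have him' : (a.im : ℝ) ≠ 0 := Int.cast_ne_zero.2 him
    unfold emb at h
    push_cast
    field_simp
    linarith

lemma embc_eq_zero {a : Zsqrtd 2} (h : embc a = 0) : a = 0 := by
  by_cases him : a.im = 0
  · have : (a.re : ℝ) = 0 := by simpa [embc, him] using h
    have hre : a.re = 0 := by exact_mod_cast this
    ext <;> simp [hre, him]
  · exfalso
    apply irrational_sqrt_two
    refine ⟨(a.re / a.im : ℚ), ?_⟩
    have him' : (a.im : ℝ) ≠ 0 := Int.cast_ne_zero.2 him
    unfold embc at h
    push_cast
    field_simp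
    linarith

lemma emb_mul (a b : Zsqrtd 2) : emb (a*b) = emb a * emb b := by
  simp only [emb, Zsqrtd.re_mul, Zsqrtd.im_mul]; push_cast
  linear_combination (-(a.im:ℝ) * b.im) * s2_sq
lemma embc_mul (a b : Zsqrtd 2) : embc (a*b) = embc a * embc b := by
  simp only [embc, Zsqrtd.re_mul, Zsqrtd.im_mul]; push_cast
  linear_combination (-(a.im:ℝ) * b.im) * s2_sq

lemma lam_sq : lam ^ (2:ℤ) = 3 + 2 * Real.sqrt 2 := by
  rw [show (2:ℤ) = ((2:ℕ):ℤ) from rfl, zpow_natCast]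
  unfold lam; nlinarith [s2_sq]

lemma lam_negsq : lam ^ (-2:ℤ) = 3 - 2 * Real.sqrt 2 := by
  have h : (3 + 2 * Real.sqrt 2) * (3 - 2 * Real.sqrt 2) = 1 := by nlinarith [s2_sq]
  have h2 : (3 + 2 * Real.sqrt 2) ≠ 0 := by nlinarith [s2_pos]
  rw [_root_.zpow_neg, lam_sq]
  field_simp
  linarith [h]

lemma emb_mu : emb ⟨3,2⟩ = lam ^ (2:ℤ) := by rw [emb_mk, lam_sq]; push_cast; ring
lemma embc_mu : embc ⟨3,2⟩ = lam ^ (-2:ℤ) := by rw [embc_mk, lam_negsq]; push_cast; ring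
lemma emb_mu' : emb ⟨3,-2⟩ = lam ^ (-2:ℤ) := by rw [emb_mk, lam_negsq]; push_cast; ring
lemma embc_mu' : embc ⟨3,-2⟩ = lam ^ (2:ℤ) := by rw [embc_mk, lam_sq]; push_cast; ring

lemma exists_scale (k : ℤ) (α : Zsqrtd 2) :
    ∃ β : Zsqrtd 2, emb β = lam ^ (2*k) * emb α ∧ embc β = lam ^ (-(2*k)) * embc α := by
  induction k using Int.induction_on with
  | zero => exact ⟨α, by simp, by simp⟩
  | succ k ih =>
    obtain ⟨β, h1, h2⟩ := ih
    refine ⟨⟨3,2⟩ * β, ?_, ?_⟩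
    · rw [emb_mul, h1, emb_mu, show 2*((k:ℤ)+1) = 2 + 2*k by ring, zpow_add₀ lam_ne]; ring
    · rw [embc_mul, h2, embc_mu, show -(2*((k:ℤ)+1)) = -2 + -(2*k) by ring, zpow_add₀ lam_ne]; ring
  | pred k ih =>
    obtain ⟨β, h1, h2⟩ := ih
    refine ⟨⟨3,-2⟩ * β, ?_, ?_⟩
    · rw [emb_mul, h1, emb_mu', show 2*(-(k:ℤ)-1) = -2 + 2*(-(k:ℤ)) by ring, zpow_add₀ lam_ne]; ring
    · rw [embc_mul, h2, embc_mu', show -(2*(-(k:ℤ)-1)) = 2 + -(2*(-(k:ℤ))) by ring, zpow_add₀ lam_ne]; ring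

lemma latA {a₁ b₁ a₂ b₂ : ℝ} (h1 : a₁ + 6 ≤ b₁) (h2 : a₂ + 6 ≤ b₂) :
    ∃ α : Zsqrtd 2, a₁ < emb α ∧ emb α < b₁ ∧ a₂ < embc α ∧ embc α < b₂ := by
  set n : ℤ := ⌊(a₁ - a₂) / (2 * Real.sqrt 2)⌋ with hn
  have h2s : (0:ℝ) < 2 * Real.sqrt 2 := by linarith [s2_pos]
  have hn1 : 2 * Real.sqrt 2 * n ≤ a₁ - a₂ := by
    have := Int.floor_le ((a₁ - a₂) / (2 * Real.sqrt 2))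
    rw [← hn] at this
    calc 2 * Real.sqrt 2 * n ≤ 2 * Real.sqrt 2 * ((a₁ - a₂) / (2 * Real.sqrt 2)) :=
          mul_le_mul_of_nonneg_left this (le_of_lt h2s)
      _ = a₁ - a₂ := by field_simp
  have hn2 : a₁ - a₂ < 2 * Real.sqrt 2 * (n + 1) := by
    have := Int.lt_floor_add_one ((a₁ - a₂) / (2 * Real.sqrt 2))
    rw [← hn] at this
    calc a₁ - a₂ = 2 * Real.sqrt 2 * ((a₁ - a₂) / (2 * Real.sqrt 2)) := by field_simp
      _ < 2 * Real.sqrt 2 * (n + 1) := mul_lt_mul_of_pos_left this h2s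
  set m : ℤ := ⌊a₁ - n * Real.sqrt 2⌋ + 1 with hm
  have hm1 : a₁ - n * Real.sqrt 2 < m := by
    have := Int.lt_floor_add_one (a₁ - n * Real.sqrt 2); push_cast [hm]; push_cast at this; linarith
  have hm2 : (m:ℝ) ≤ a₁ - n * Real.sqrt 2 + 1 := by
    have := Int.floor_le (a₁ - n * Real.sqrt 2); push_cast [hm]; push_cast at this; linarith
  refine ⟨⟨m, n⟩, ?_, ?_, ?_, ?_⟩
  · rw [emb_mk]; linarith
  · rw [emb_mk]; linarith
  · rw [embc_mk]; linarith [s2_lt]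
  · rw [embc_mk]; linarith [s2_lt]

lemma zpow2mul (k : ℤ) : ((lam ^ (2:ℤ) : ℝ)) ^ k = lam ^ (2 * k) :=
  (_root_.zpow_mul lam 2 k).symm

lemma arith {L₁ L₂ c t : ℝ} (hL1 : 0 < L₁) (ht : 0 < t) (hts : t * (t * L₁) = L₂)
    (hC : 36 * lam ^ 4 < L₁ * L₂) (hc1 : t ≤ c) (hc2 : c ≤ lam ^ 2 * t) :
    6 ≤ c * L₁ ∧ 6 * c ≤ L₂ := by
  have hlam1 : (1:ℝ) < lam ^ 2 := one_lt_pow₀ lam_one_lt (by norm_num)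
  have hlam2 : (0:ℝ) < lam ^ 2 := by positivity
  have hP : 6 * lam ^ 2 < t * L₁ := by
    by_contra hcon
    push_neg at hcon
    have hsq : (t * L₁) * (t * L₁) ≤ (6 * lam ^ 2) * (6 * lam ^ 2) :=
      mul_le_mul hcon hcon (by positivity) (by positivity)
    have he : (t * L₁) * (t * L₁) = L₁ * L₂ := by rw [← hts]; ring
    nlinarith [he, hsq]
  constructor
  · nlinarith [mul_le_mul_of_nonneg_right hc1 hL1.le]
  · have h2 : 6 * lam ^ 2 * t < (t * L₁) * t := mul_lt_mul_of_pos_right hP ht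
    have h1 : 6 * c ≤ 6 * (lam ^ 2 * t) := by linarith
    nlinarith [ht, hts]

lemma latB {a₁ b₁ a₂ b₂ : ℝ} (hC : 36 * lam ^ 4 < (b₁ - a₁) * (b₂ - a₂))
    (hL1 : 0 < b₁ - a₁) (hL2 : 0 < b₂ - a₂) :
    ∃ α : Zsqrtd 2, a₁ < emb α ∧ emb α < b₁ ∧ a₂ < embc α ∧ embc α < b₂ := by
  obtain ⟨t, ht_pos, hts⟩ : ∃ t : ℝ, 0 < t ∧ t * (t * (b₁ - a₁)) = b₂ - a₂ := by
    refine ⟨Real.sqrt ((b₂ - a₂) / (b₁ - a₁)), Real.sqrt_pos.2 (div_pos hL2 hL1), ?_⟩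
    rw [← mul_assoc, Real.mul_self_sqrt (le_of_lt (div_pos hL2 hL1))]
    field_simp
  have hlam2 : (1:ℝ) < lam ^ (2:ℤ) := one_lt_zpow₀ lam_one_lt (by norm_num)
  obtain ⟨j, hj1, hj2⟩ := exists_mem_Ico_zpow ht_pos hlam2
  obtain ⟨c, hceq, hc_pos, hc1, hc2⟩ :
      ∃ c : ℝ, c = lam ^ (2 * (j+1)) ∧ 0 < c ∧ t ≤ c ∧ c ≤ lam ^ 2 * t := by
    refine ⟨lam ^ (2 * (j+1)), rfl, zpow_pos lam_pos _, ?_, ?_⟩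
    · rw [← zpow2mul]; exact le_of_lt hj2
    · rw [← zpow2mul, zpow_add₀ (by positivity : (lam ^ (2:ℤ) : ℝ) ≠ 0), zpow_one]
      have : ((lam ^ (2:ℤ) : ℝ)) ^ j * lam ^ (2:ℤ) ≤ t * lam ^ (2:ℤ) :=
        mul_le_mul_of_nonneg_right hj1 (by positivity)
      have h2n : (lam:ℝ) ^ (2:ℤ) = lam ^ (2:ℕ) := by
        rw [show (2:ℤ) = ((2:ℕ):ℤ) from rfl, zpow_natCast]
      rw [h2n] at this ⊢
      linarith
  obtain ⟨hlen1, hlen2⟩ := arith hL1 ht_pos hts hC hc1 hc2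
  obtain ⟨α', e1, e2, e3, e4⟩ := latA (a₁ := c * a₁) (b₁ := c * b₁) (a₂ := a₂ / c) (b₂ := b₂ / c)
    (by nlinarith) (by rw [div_add' _ _ _ (ne_of_gt hc_pos), div_le_div_iff₀ hc_pos hc_pos]; nlinarith)
  obtain ⟨β, f1, f2⟩ := exists_scale (-(j+1)) α'
  have hinv : lam ^ (2 * (-(j+1))) = c⁻¹ := by
    rw [show 2 * (-(j+1)) = -(2*(j+1)) by ring, _root_.zpow_neg, ← hceq]
  have hinv2 : lam ^ (-(2 * (-(j+1)))) = c := by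
    rw [show -(2 * (-(j+1))) = 2*(j+1) by ring, ← hceq]
  have hcinv_pos : 0 < c⁻¹ := by positivity
  refine ⟨β, ?_, ?_, ?_, ?_⟩
  · rw [f1, hinv]
    calc a₁ = c⁻¹ * (c * a₁) := by field_simp
      _ < c⁻¹ * emb α' := mul_lt_mul_of_pos_left e1 hcinv_pos
  · rw [f1, hinv]
    calc c⁻¹ * emb α' < c⁻¹ * (c * b₁) := mul_lt_mul_of_pos_left e2 hcinv_pos
      _ = b₁ := by field_simp
  · rw [f2, hinv2]
    calc a₂ = c * (a₂ / c) := by field_simp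
      _ < c * embc α' := mul_lt_mul_of_pos_left e3 hc_pos
  · rw [f2, hinv2]
    calc c * embc α' < c * (b₂ / c) := mul_lt_mul_of_pos_left e4 hc_pos
      _ = b₂ := by field_simp

lemma abs_add_lt_iff {x y c : ℝ} :
    |x| + |y| < c ↔ (x + y < c ∧ x - y < c ∧ -x + y < c ∧ -x - y < c) := by
  constructor
  · intro h
    refine ⟨?_, ?_, ?_, ?_⟩ <;>
      linarith [le_abs_self x, le_abs_self y, neg_abs_le x, neg_abs_le y]
  · rintro ⟨h1, h2, h3, h4⟩
    rcases abs_cases x with ⟨hx, _⟩ | ⟨hx, _⟩ <;> rcases abs_cases y with ⟨hy, _⟩ | ⟨hy, _⟩ <;>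
      rw [hx, hy] <;> linarith

lemma convex_lin_lt (a b r : ℝ) : Convex ℝ {p : ℝ × ℝ | a * p.1 + b * p.2 < r} :=
  convex_halfSpace_lt ⟨fun _ _ => by simp; ring, fun _ _ => by simp [smul_eq_mul]; ring⟩ r

lemma convex_Tset (s : ℝ) : Convex ℝ (Tset s) := by
  have he : Tset s = {p : ℝ × ℝ | (-1) * p.1 + 0 * p.2 < 0} ∩
      ({p : ℝ × ℝ | 1 * p.1 + 0 * p.2 < Real.sqrt (s / thetaHat)} ∩
      ({p : ℝ × ℝ | (-1) * p.1 + 1 * p.2 < 0} ∩ {p : ℝ × ℝ | (-1) * p.1 + (-1) * p.2 < 0})) := by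
    ext p
    simp only [Tset, Set.mem_setOf_eq, Set.mem_inter_iff, abs_lt]
    constructor
    · rintro ⟨h1, h2, h3, h4⟩; refine ⟨by linarith, by linarith, by linarith, by linarith⟩
    · rintro ⟨h1, ⟨h2, h3, h4⟩⟩; refine ⟨by linarith, by linarith, by linarith, by linarith⟩
  rw [he]
  exact (convex_lin_lt _ _ _).inter ((convex_lin_lt _ _ _).inter
    ((convex_lin_lt _ _ _).inter (convex_lin_lt _ _ _)))

lemma convex_Woct : Convex ℝ Woct := by
  have he : Woct = {p : ℝ × ℝ | 1 * p.1 + 0 * p.2 < lam / Real.sqrt 2} ∩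
      ({p : ℝ × ℝ | (-1) * p.1 + 0 * p.2 < lam / Real.sqrt 2} ∩
      ({p : ℝ × ℝ | 0 * p.1 + 1 * p.2 < lam / Real.sqrt 2} ∩
      ({p : ℝ × ℝ | 0 * p.1 + (-1) * p.2 < lam / Real.sqrt 2} ∩
      ({p : ℝ × ℝ | 1 * p.1 + 1 * p.2 < lam} ∩
      ({p : ℝ × ℝ | 1 * p.1 + (-1) * p.2 < lam} ∩
      ({p : ℝ × ℝ | (-1) * p.1 + 1 * p.2 < lam} ∩
       {p : ℝ × ℝ | (-1) * p.1 + (-1) * p.2 < lam})))))) := by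
    ext p
    simp only [Woct, Set.mem_setOf_eq, Set.mem_inter_iff, abs_lt, abs_add_lt_iff]
    constructor
    · rintro ⟨⟨a1, a2⟩, ⟨b1, b2⟩, c1, c2, c3, c4⟩
      exact ⟨by linarith, by linarith, by linarith, by linarith, by linarith, by linarith,
        by linarith, by linarith⟩
    · rintro ⟨a1, a2, b1, b2, c1, c2, c3, c4⟩
      exact ⟨⟨by linarith, by linarith⟩, ⟨by linarith, by linarith⟩,
        by linarith, by linarith, by linarith, by linarith⟩
  rw [he]
  exact (convex_lin_lt _ _ _).inter ((convex_lin_lt _ _ _).inter ((convex_lin_lt _ _ _).inter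
    ((convex_lin_lt _ _ _).inter ((convex_lin_lt _ _ _).inter ((convex_lin_lt _ _ _).inter
    ((convex_lin_lt _ _ _).inter (convex_lin_lt _ _ _)))))))

lemma Tset_bdd (s : ℝ) : ∀ z ∈ Tset s, |z.1| ≤ Real.sqrt (s / thetaHat) ∧
    |z.2| ≤ Real.sqrt (s / thetaHat) := by
  rintro z ⟨h1, h2, h3⟩
  rcases abs_cases z.1 with ⟨e, _⟩ | ⟨e, _⟩ <;> rcases abs_cases z.2 with ⟨f, _⟩ | ⟨f, _⟩ <;>
    constructor <;> linarith [abs_nonneg z.2]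

lemma Woct_bdd : ∀ z ∈ Woct, |z.1| ≤ lam ∧ |z.2| ≤ lam := by
  rintro z ⟨h1, h2, _⟩
  have : lam / Real.sqrt 2 ≤ lam := div_le_self (le_of_lt lam_pos) (by linarith [s2_gt])
  exact ⟨by linarith, by linarith⟩

lemma convexS {p q : ℝ × ℝ} {c : ℝ} {U : Set (ℝ × ℝ)} (hU : Convex ℝ U) :
    Convex ℝ {x : ℝ | c • (p + x • q) ∈ U} := by
  intro x hx y hy a b ha hb hab
  have key : c • (p + (a • x + b • y) • q)
      = a • (c • (p + x • q)) + b • (c • (p + y • q)) := by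
    simp only [smul_eq_mul, Prod.smul_def, Prod.mk_add_mk, Prod.smul_fst, Prod.smul_snd,
      Prod.fst_add, Prod.snd_add]
    apply Prod.ext
    · simp only [smul_eq_mul]; linear_combination (-(c * p.1)) * hab
    · simp only [smul_eq_mul]; linear_combination (-(c * p.2)) * hab
  show c • (p + (a • x + b • y) • q) ∈ U
  rw [key]
  exact hU hx hy ha hb hab

lemma boundedS {p q : ℝ × ℝ} (hq : q ≠ 0) {c : ℝ} (hc : c ≠ 0) {U : Set (ℝ × ℝ)} {R : ℝ}
    (hU : ∀ z ∈ U, |z.1| ≤ R ∧ |z.2| ≤ R) :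
    Bornology.IsBounded {x : ℝ | c • (p + x • q) ∈ U} := by
  have habs : ∀ (pi qi : ℝ), qi ≠ 0 → ∀ x : ℝ, |c * (pi + x * qi)| ≤ R →
      |x| ≤ (|pi| + R / |c|) / |qi| := by
    intro pi qi hqi x hx
    have hc' : 0 < |c| := abs_pos.2 hc
    have hqi' : 0 < |qi| := abs_pos.2 hqi
    rw [abs_mul] at hx
    have h1 : |pi + x * qi| ≤ R / |c| := by
      rw [le_div_iff₀ hc']; linarith [mul_comm |c| |pi + x * qi|]
    have h2 : |x * qi| ≤ |pi| + R / |c| := by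
      have : |x * qi| - |pi| ≤ |pi + x * qi| := by
        have := abs_sub_abs_le_abs_sub (x * qi) (-pi)
        simp only [abs_neg] at this
        have h3 : x * qi - -pi = pi + x * qi := by ring
        rw [h3] at this
        linarith
      linarith
    rw [abs_mul] at h2
    exact (le_div_iff₀ hqi').2 h2
  have hq12 : q.1 ≠ 0 ∨ q.2 ≠ 0 := by
    by_contra hcon
    push_neg at hcon
    exact hq (Prod.ext hcon.1 hcon.2)
  rcases hq12 with h | h
  · apply (Metric.isBounded_Icc (-((|p.1| + R / |c|) / |q.1|)) ((|p.1| + R / |c|) / |q.1|)).subset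
    intro x hx
    have hm := (hU _ hx).1
    simp only [Prod.smul_fst, Prod.fst_add, smul_eq_mul, Prod.smul_snd] at hm
    exact abs_le.1 (habs p.1 q.1 h x hm)
  · apply (Metric.isBounded_Icc (-((|p.2| + R / |c|) / |q.2|)) ((|p.2| + R / |c|) / |q.2|)).subset
    intro x hx
    have hm := (hU _ hx).2
    simp only [Prod.smul_fst, Prod.fst_add, smul_eq_mul, Prod.smul_snd, Prod.snd_add] at hm
    exact abs_le.1 (habs p.2 q.2 h x hm)

lemma mul2_ne {v : ℝ × ℝ} {h : Matrix (Fin 2) (Fin 2) ℝ} (hd : h.det = 1) (hv : v ≠ 0) :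
    mul2 v h ≠ 0 := by
  intro h0
  apply hv
  rw [Matrix.det_fin_two] at hd
  rw [Prod.ext_iff] at h0
  obtain ⟨e1, e2⟩ := h0
  simp only [mul2, Prod.fst_zero, Prod.snd_zero] at e1 e2
  rw [Prod.ext_iff]
  constructor
  · show v.1 = (0 : ℝ × ℝ).1
    rw [Prod.fst_zero]
    linear_combination h 1 1 * e1 - h 1 0 * e2 - v.1 * hd
  · show v.2 = (0 : ℝ × ℝ).2
    rw [Prod.snd_zero]
    linear_combination h 0 0 * e2 - h 0 1 * e1 - v.2 * hd

lemma volD {S T : Set ℝ} (hSc : Convex ℝ S) (hSb : Bornology.IsBounded S)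
    (hTc : Convex ℝ T) (hTb : Bornology.IsBounded T)
    (hempty : ∀ α : Zsqrtd 2, ¬(emb α ∈ S ∧ embc α ∈ T)) :
    volume S * volume T ≤ ENNReal.ofReal (36 * lam ^ 4) := by
  rcases S.eq_empty_or_nonempty with rfl | hS
  · simp
  rcases T.eq_empty_or_nonempty with rfl | hT
  · simp
  obtain ⟨x₀, hx₀⟩ := id hS
  obtain ⟨y₀, hy₀⟩ := id hT
  have hSsub : S ⊆ Icc (sInf S) (sSup S) :=
    fun x hx => ⟨csInf_le hSb.bddBelow hx, le_csSup hSb.bddAbove hx⟩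
  have hTsub : T ⊆ Icc (sInf T) (sSup T) :=
    fun x hx => ⟨csInf_le hTb.bddBelow hx, le_csSup hTb.bddAbove hx⟩
  have hSsup : Ioo (sInf S) (sSup S) ⊆ S := by
    intro x hx
    obtain ⟨y, hyS, hyx⟩ := exists_lt_of_csInf_lt hS hx.1
    obtain ⟨z, hzS, hxz⟩ := exists_lt_of_lt_csSup hS hx.2
    exact hSc.ordConnected.out hyS hzS ⟨hyx.le, hxz.le⟩
  have hTsup : Ioo (sInf T) (sSup T) ⊆ T := by
    intro x hx
    obtain ⟨y, hyS, hyx⟩ := exists_lt_of_csInf_lt hT hx.1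
    obtain ⟨z, hzS, hxz⟩ := exists_lt_of_lt_csSup hT hx.2
    exact hTc.ordConnected.out hyS hzS ⟨hyx.le, hxz.le⟩
  have hab : sInf S ≤ sSup S := le_trans (csInf_le hSb.bddBelow hx₀) (le_csSup hSb.bddAbove hx₀)
  have hcd : sInf T ≤ sSup T := le_trans (csInf_le hTb.bddBelow hy₀) (le_csSup hTb.bddAbove hy₀)
  have key : (sSup S - sInf S) * (sSup T - sInf T) ≤ 36 * lam ^ 4 := by
    by_contra hcon
    push_neg at hcon
    have hpos : (0:ℝ) < 36 * lam ^ 4 := by have := pow_pos lam_pos 4; linarith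
    have h1 : 0 < sSup S - sInf S := by
      rcases eq_or_lt_of_le (sub_nonneg.2 hab) with h | h
      · exfalso; rw [← h] at hcon; simp at hcon; linarith
      · exact h
    have h2 : 0 < sSup T - sInf T := by
      rcases eq_or_lt_of_le (sub_nonneg.2 hcd) with h | h
      · exfalso; rw [← h] at hcon; simp at hcon; linarith
      · exact h
    obtain ⟨α, e1, e2, e3, e4⟩ := latB hcon h1 h2
    exact hempty α ⟨hSsup ⟨e1, e2⟩, hTsup ⟨e3, e4⟩⟩
  calc volume S * volume T ≤ volume (Icc (sInf S) (sSup S)) * volume (Icc (sInf T) (sSup T)) :=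
        mul_le_mul' (measure_mono hSsub) (measure_mono hTsub)
    _ = ENNReal.ofReal (sSup S - sInf S) * ENNReal.ofReal (sSup T - sInf T) := by
        rw [Real.volume_Icc, Real.volume_Icc]
    _ = ENNReal.ofReal ((sSup S - sInf S) * (sSup T - sInf T)) :=
        (ENNReal.ofReal_mul (sub_nonneg.2 hab)).symm
    _ ≤ ENNReal.ofReal (36 * lam ^ 4) := ENNReal.ofReal_le_ofReal key


theorem stmt16 (α₃ α₄ : Zsqrtd 2) (hcop : IsCoprime α₃ α₄) (hpos : 0 < emb α₃) :
    ∃ C > (0:ℝ), ∀ (s : ℝ), 0 < s → ∀ r : ℤ,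
      lam ^ (2*r) ≤ s ^ ((1:ℝ)/4) → s ^ ((1:ℝ)/4) < lam ^ (2*r+2) →
      ∀ (β₁ β₂ : Zsqrtd 2) (h₁ h₂ : Matrix (Fin 2) (Fin 2) ℝ), h₁.det = 1 → h₂.det = 1 →
      (((fun u => Matrix.vecMul u (bd h₁ h₂)) '' Lv α₃ α₄ (latvec β₁ β₂)) ∩ calT s r = ∅ ↔
        Lp ∩
          ({x : ℝ | (lam ^ (2*r) : ℝ) •
              (mul2 (emb β₁, emb β₂) h₁ + x • mul2 (emb α₃, emb α₄) h₁) ∈ Tset s} ×ˢ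
           {x : ℝ | (lam ^ (-(2*r)) : ℝ) •
              (mul2 (embc β₁, embc β₂) h₂ + x • mul2 (embc α₃, embc α₄) h₂) ∈ Woct}) = ∅) ∧
      (((fun u => Matrix.vecMul u (bd h₁ h₂)) '' Lv α₃ α₄ (latvec β₁ β₂)) ∩ calT s r = ∅ →
        volume {x : ℝ | (lam ^ (2*r) : ℝ) •
              (mul2 (emb β₁, emb β₂) h₁ + x • mul2 (emb α₃, emb α₄) h₁) ∈ Tset s} *
        volume {x : ℝ | (lam ^ (-(2*r)) : ℝ) •
              (mul2 (embc β₁, embc β₂) h₂ + x • mul2 (embc α₃, embc α₄) h₂) ∈ Woct}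
          ≤ ENNReal.ofReal C) := by
  refine ⟨36 * lam ^ 4, by have := pow_pos lam_pos 4; linarith, ?_⟩
  intro s hs r hr1 hr2 β₁ β₂ h₁ h₂ hd1 hd2
  set S₁ : Set ℝ := {x : ℝ | (lam ^ (2*r) : ℝ) •
      (mul2 (emb β₁, emb β₂) h₁ + x • mul2 (emb α₃, emb α₄) h₁) ∈ Tset s} with hS₁
  set S₂ : Set ℝ := {x : ℝ | (lam ^ (-(2*r)) : ℝ) •
      (mul2 (embc β₁, embc β₂) h₂ + x • mul2 (embc α₃, embc α₄) h₂) ∈ Woct} with hS₂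
  have key : ∀ m n : ℤ,
      Matrix.vecMul (latvec β₁ β₂ + (m:ℝ) • vv1 α₃ α₄ + (n:ℝ) • vv2 α₃ α₄) (bd h₁ h₂)
        ∈ calT s r ↔ (emb ⟨m,n⟩ ∈ S₁ ∧ embc ⟨m,n⟩ ∈ S₂) := by
    intro m n
    set u : Fin 4 → ℝ := latvec β₁ β₂ + (m:ℝ) • vv1 α₃ α₄ + (n:ℝ) • vv2 α₃ α₄ with hu
    have e0 : Matrix.vecMul u (bd h₁ h₂) 0
        = (emb β₁ + emb ⟨m,n⟩ * emb α₃) * h₁ 0 0 + (emb β₂ + emb ⟨m,n⟩ * emb α₄) * h₁ 1 0 := by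
      simp [hu, Matrix.vecMul, dotProduct, Fin.sum_univ_four, bd, latvec, vv1, vv2,
        emb_mk, Matrix.vecHead, Matrix.vecTail]
      ring
    have e1 : Matrix.vecMul u (bd h₁ h₂) 1
        = (emb β₁ + emb ⟨m,n⟩ * emb α₃) * h₁ 0 1 + (emb β₂ + emb ⟨m,n⟩ * emb α₄) * h₁ 1 1 := by
      simp [hu, Matrix.vecMul, dotProduct, Fin.sum_univ_four, bd, latvec, vv1, vv2,
        emb_mk, Matrix.vecHead, Matrix.vecTail]
      ring
    have e2 : Matrix.vecMul u (bd h₁ h₂) 2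
        = (embc β₁ + embc ⟨m,n⟩ * embc α₃) * h₂ 0 0 + (embc β₂ + embc ⟨m,n⟩ * embc α₄) * h₂ 1 0 := by
      simp [hu, Matrix.vecMul, dotProduct, Fin.sum_univ_four, bd, latvec, vv1, vv2,
        embc_mk, Matrix.vecHead, Matrix.vecTail]
      ring
    have e3 : Matrix.vecMul u (bd h₁ h₂) 3
        = (embc β₁ + embc ⟨m,n⟩ * embc α₃) * h₂ 0 1 + (embc β₂ + embc ⟨m,n⟩ * embc α₄) * h₂ 1 1 := by
      simp [hu, Matrix.vecMul, dotProduct, Fin.sum_univ_four, bd, latvec, vv1, vv2,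
        embc_mk, Matrix.vecHead, Matrix.vecTail]
      ring
    have P1 : (lam ^ (2*r) * Matrix.vecMul u (bd h₁ h₂) 0,
          lam ^ (2*r) * Matrix.vecMul u (bd h₁ h₂) 1)
        = (lam ^ (2*r) : ℝ) •
            (mul2 (emb β₁, emb β₂) h₁ + emb ⟨m,n⟩ • mul2 (emb α₃, emb α₄) h₁) := by
      rw [e0, e1]
      simp only [mul2, Prod.smul_mk, Prod.mk_add_mk, smul_eq_mul, Prod.mk.injEq]
      constructor <;> ring
    have P2 : (lam ^ (-(2*r)) * Matrix.vecMul u (bd h₁ h₂) 2,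
          lam ^ (-(2*r)) * Matrix.vecMul u (bd h₁ h₂) 3)
        = (lam ^ (-(2*r)) : ℝ) •
            (mul2 (embc β₁, embc β₂) h₂ + embc ⟨m,n⟩ • mul2 (embc α₃, embc α₄) h₂) := by
      rw [e2, e3]
      simp only [mul2, Prod.smul_mk, Prod.mk_add_mk, smul_eq_mul, Prod.mk.injEq]
      constructor <;> ring
    show (Matrix.vecMul u (bd h₁ h₂)) ∈ calT s r ↔ _
    simp only [calT, Set.mem_setOf_eq]
    rw [P1, P2, hS₁, hS₂]
    simp only [Set.mem_setOf_eq]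
  have iff1 : ((fun u => Matrix.vecMul u (bd h₁ h₂)) '' Lv α₃ α₄ (latvec β₁ β₂)) ∩ calT s r = ∅ ↔
      Lp ∩ (S₁ ×ˢ S₂) = ∅ := by
    rw [← Set.not_nonempty_iff_eq_empty, ← Set.not_nonempty_iff_eq_empty]
    apply not_congr
    constructor
    · rintro ⟨w, ⟨u, ⟨m, n, rfl⟩, rfl⟩, hw⟩
      exact ⟨(emb ⟨m,n⟩, embc ⟨m,n⟩), ⟨⟨m,n⟩, rfl⟩, Set.mem_prod.2 ((key m n).1 hw)⟩
    · rintro ⟨p, ⟨α, rfl⟩, hp⟩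
      rw [Set.mem_prod] at hp
      exact ⟨_, ⟨latvec β₁ β₂ + (α.re:ℝ) • vv1 α₃ α₄ + (α.im:ℝ) • vv2 α₃ α₄,
        ⟨α.re, α.im, rfl⟩, rfl⟩, (key α.re α.im).2 ⟨hp.1, hp.2⟩⟩
  refine ⟨iff1, ?_⟩
  intro hemp
  have hforall : ∀ α : Zsqrtd 2, ¬(emb α ∈ S₁ ∧ embc α ∈ S₂) := by
    intro α hα
    have hprod : (emb α, embc α) ∈ Lp ∩ (S₁ ×ˢ S₂) :=
      ⟨⟨α, rfl⟩, Set.mem_prod.2 ⟨hα.1, hα.2⟩⟩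
    rw [iff1.1 hemp] at hprod
    exact hprod
  have hal3 : α₃ ≠ 0 := by
    intro hc
    rw [hc] at hpos
    simp [emb] at hpos
  have hq1 : mul2 (emb α₃, emb α₄) h₁ ≠ 0 := by
    apply mul2_ne hd1
    intro hc
    rw [Prod.ext_iff] at hc
    simp only [Prod.fst_zero] at hc
    exact (ne_of_gt hpos) hc.1
  have hq2 : mul2 (embc α₃, embc α₄) h₂ ≠ 0 := by
    apply mul2_ne hd2
    intro hc
    rw [Prod.ext_iff] at hc
    simp only [Prod.fst_zero] at hc
    exact hal3 (embc_eq_zero hc.1)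
  have hc1 : (lam ^ (2*r) : ℝ) ≠ 0 := ne_of_gt (zpow_pos lam_pos _)
  have hc2 : (lam ^ (-(2*r)) : ℝ) ≠ 0 := ne_of_gt (zpow_pos lam_pos _)
  exact volD (convexS (convex_Tset s)) (boundedS hq1 hc1 (Tset_bdd s))
    (convexS convex_Woct) (boundedS hq2 hc2 Woct_bdd) hforall


end
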